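/- With A as in the binomial determinant setting (bt×bt matrix with entries C(x_s, a+c+r−1)), for every 1 ≤ i ≤ t and every 1 ≤ k ≤ b−1, the polynomial (x_i + k)^{b−k} divides det A in ℚ[x_1,…,x_t]. -/

import Mathlib

/-- Generalized binomial coefficient `C(x,k) = x(x-1)⋯(x-k+1)/k!` in a commutative ℚ-algebra. -/
noncomputable def gbinom {R : Type*} [CommRing R] [Algebra ℚ R] (x : R) (k : ℕ) : R :=
  algebraMap ℚ R ((k.factorial : ℚ)⁻¹) * ∏ i ∈ Finset.range k, (x - (i : R))

/-- The `bt × bt` matrix `A`: rows indexed by `p = (p₁,p₂)` encoding `r - 1 = b·p₁ + p₂`,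
columns indexed by `(s, c)` with `1 ≤ s ≤ t`, `0 ≤ c ≤ b-1`, with entry
`C(x_s, a + c + r - 1)`. -/
noncomputable def binomMatrix (a b t : ℕ) :
    Matrix (Fin t × Fin b) (Fin t × Fin b) (MvPolynomial (Fin t) ℚ) :=
  fun p col =>
    gbinom (MvPolynomial.X col.1) (a + (col.2 : ℕ) + (b * (p.1 : ℕ) + (p.2 : ℕ)))

/-- The polynomial (or scalar) `H(x_1,…,x_t)` from the appendix. -/
noncomputable def Hfun {R : Type*} [CommRing R] (a b t : ℕ) (x : Fin t → R) : R :=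
  (∏ i : Fin t,
      ((∏ j ∈ Finset.Icc 1 (b - 1), (x i + (j : R)) ^ (b - j)) *
        (∏ j ∈ Finset.range a, (x i - (j : R)) ^ b) *
        ∏ j ∈ Finset.Icc 1 (b - 1), (x i - (a : R) + 1 - (j : R)) ^ (b - j))) *
    ∏ p ∈ Finset.univ.filter (fun p : Fin t × Fin t => p.1 < p.2),
      ∏ k ∈ Finset.Icc (-(b : ℤ) + 1) ((b : ℤ) - 1),
        (x p.1 - x p.2 + (k : R)) ^ (b - k.natAbs)

open Finset

section lemmas
variable {R : Type*} [CommRing R] [Algebra ℚ R]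

lemma gbinom_pascal (x : R) (n : ℕ) :
    gbinom x n + gbinom x (n+1) = gbinom (x+1) (n+1) := by
  unfold gbinom
  have h2 : ∏ j ∈ range (n+1), (x + 1 - (j:R)) = (x + 1) * ∏ j ∈ range n, (x - (j:R)) := by
    rw [Finset.prod_range_succ']
    have : ∀ j ∈ range n, (x + 1 - ((j+1 : ℕ):R)) = x - (j:R) := by
      intro j _; push_cast; ring
    rw [Finset.prod_congr rfl this]
    push_cast; ring
  rw [Finset.prod_range_succ, h2]
  have hf : ((n.factorial : ℚ))⁻¹ = ((n+1 : ℕ) : ℚ) * (((n+1).factorial : ℚ))⁻¹ := by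
    rw [Nat.factorial_succ]
    push_cast
    rw [mul_inv, ← mul_assoc, mul_inv_cancel₀ (by positivity), one_mul]
  rw [hf, map_mul, map_natCast]
  push_cast
  ring

lemma gbinom_vandermonde (x : R) (n k : ℕ) :
    ∑ m ∈ Finset.range (k+1), (k.choose m : R) * gbinom x (n + m)
      = gbinom (x + (k:R)) (n + k) := by
  induction k generalizing n with
  | zero => simp
  | succ k ih =>
    rw [Finset.sum_range_succ']
    have step : ∀ m ∈ range (k+1),
        ((k+1).choose (m+1) : R) * gbinom x (n + (m+1))
          = (k.choose m : R) * gbinom x ((n+1) + m)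
            + (k.choose (m+1) : R) * gbinom x (n + (m+1)) := by
      intro m _
      rw [Nat.choose_succ_succ]
      push_cast
      rw [add_mul]
      congr 3
      omega
    rw [Finset.sum_congr rfl step, Finset.sum_add_distrib]
    have h2 : (∑ m ∈ range (k+1), (k.choose (m+1) : R) * gbinom x (n + (m+1)))
        + ((k+1).choose 0 : R) * gbinom x (n + 0)
        = gbinom (x + (k:R)) (n + k) := by
      rw [← ih n, Finset.sum_range_succ, Nat.choose_succ_self]
      push_cast
      rw [Finset.sum_range_succ']
      simp
    rw [add_assoc, h2, ih (n+1), add_comm]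
    have hp := gbinom_pascal (x + (k:R)) (n+k)
    rw [show n+1+k = n+(k+1) from by omega]
    push_cast
    rw [← add_assoc x]
    exact hp

/-- The cofactor of `x` in `C(x,n)` for `n ≥ 1`. -/
noncomputable def gbinomAux (x : R) (n : ℕ) : R :=
  algebraMap ℚ R ((n.factorial : ℚ)⁻¹) * ∏ j ∈ Finset.range (n-1), (x - ((j:R)+1))

lemma gbinom_eq_mul_aux (x : R) (n : ℕ) (hn : 1 ≤ n) :
    gbinom x n = x * gbinomAux x n := by
  obtain ⟨m, rfl⟩ : ∃ m, n = m + 1 := ⟨n - 1, by omega⟩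
  unfold gbinom gbinomAux
  rw [Finset.prod_range_succ']
  have : ∀ j ∈ range m, (x - ((j+1 : ℕ):R)) = x - ((j:R)+1) := by
    intro j _; push_cast; ring
  rw [Finset.prod_congr rfl this]
  simp
  ring

end lemmas

/-- Unipotent column-operation matrix. -/
noncomputable def Emat (b t : ℕ) (i : Fin t) (k : ℕ) :
    Matrix (Fin t × Fin b) (Fin t × Fin b) (MvPolynomial (Fin t) ℚ) :=
  fun q q' =>
    if q.1 = i ∧ q'.1 = i then
      (if (q'.2:ℕ) ≤ (q.2:ℕ) then ((k.choose ((q.2:ℕ) - (q'.2:ℕ))) : MvPolynomial (Fin t) ℚ)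
       else 0)
    else (if q = q' then 1 else 0)

lemma Emat_blockTriangular (b t : ℕ) (i : Fin t) (k : ℕ) :
    (Emat b t i k).BlockTriangular (fun q => -((q.2:ℕ):ℤ)) := by
  intro q q' h
  simp only [neg_lt_neg_iff, Int.ofNat_lt, Nat.cast_lt] at h
  unfold Emat
  by_cases hc : q.1 = i ∧ q'.1 = i
  · rw [if_pos hc, if_neg (by omega)]
  · rw [if_neg hc, if_neg (by
      intro he; subst he; omega)]

lemma Emat_det (b t : ℕ) (i : Fin t) (k : ℕ) :
    (Emat b t i k).det = 1 := by
  rw [Matrix.BlockTriangular.det (Emat_blockTriangular b t i k)]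
  apply Finset.prod_eq_one
  intro v _
  have : (Emat b t i k).toSquareBlock (fun q => -((q.2:ℕ):ℤ)) v = 1 := by
    apply Matrix.ext
    rintro ⟨q, hq⟩ ⟨q', hq'⟩
    have h2 : q.2 = q'.2 := by
      have : ((q.2:ℕ):ℤ) = ((q'.2:ℕ):ℤ) := by omega
      exact Fin.ext (by exact_mod_cast this)
    show Emat b t i k q q' = _
    rw [Matrix.one_apply]
    by_cases he : q = q'
    · rw [if_pos (by simp [he]), he]
      unfold Emat
      by_cases hc : q'.1 = i ∧ q'.1 = i
      · rw [if_pos hc, if_pos le_rfl, Nat.sub_self, Nat.choose_zero_right, Nat.cast_one]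
      · rw [if_neg hc, if_pos rfl]
    · rw [if_neg (by simp [he])]
      unfold Emat
      by_cases hc : q.1 = i ∧ q'.1 = i
      · exact absurd (Prod.ext (hc.1.trans hc.2.symm) h2) he
      · rw [if_neg hc, if_neg he]
  rw [this, Matrix.det_one]

open MvPolynomial in
lemma mul_Emat_marked (a b t : ℕ) (i : Fin t) (k : ℕ) (ha : 1 ≤ a) (hb : 1 ≤ b)
    (p : Fin t × Fin b) (c' : Fin b) (hc : (c':ℕ) + k ≤ b - 1) :
    (binomMatrix a b t * Emat b t i k) p (i, c')
      = gbinom (X i + (k : MvPolynomial (Fin t) ℚ))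
          ((a + (c':ℕ) + (b * (p.1:ℕ) + (p.2:ℕ))) + k) := by
  set m : ℕ := b * (p.1:ℕ) + (p.2:ℕ) with hm
  rw [Matrix.mul_apply, Fintype.sum_prod_type]
  rw [Finset.sum_eq_single_of_mem i (Finset.mem_univ i)]
  swap
  · intro s _ hs
    apply Finset.sum_eq_zero
    intro c _
    have : Emat b t i k (s, c) (i, c') = 0 := by
      unfold Emat
      rw [if_neg (by simp [hs]), if_neg (by simp [hs])]
    rw [this, mul_zero]
  · -- inner sum over c : Fin b
    have hE : ∀ c : Fin b, Emat b t i k (i, c) (i, c')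
        = (if (c':ℕ) ≤ (c:ℕ) then ((k.choose ((c:ℕ) - (c':ℕ))) : MvPolynomial (Fin t) ℚ)
           else 0) := by
      intro c; unfold Emat; rw [if_pos ⟨rfl, rfl⟩]
    simp only [hE]
    have key : ∑ c : Fin b,
        binomMatrix a b t p (i, c) *
          (if (c':ℕ) ≤ (c:ℕ) then ((k.choose ((c:ℕ) - (c':ℕ))) : MvPolynomial (Fin t) ℚ)
           else 0)
        = ∑ n ∈ Finset.range b,
            gbinom (X i) (a + n + m) *
              (if (c':ℕ) ≤ n then ((k.choose (n - (c':ℕ))) : MvPolynomial (Fin t) ℚ)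
               else 0) := by
      rw [← Fin.sum_univ_eq_sum_range
        (fun n => gbinom (X i) (a + n + m) *
          (if (c':ℕ) ≤ n then ((k.choose (n - (c':ℕ))) : MvPolynomial (Fin t) ℚ) else 0)) b]
      rfl
    rw [key, Finset.range_eq_Ico,
      ← Finset.sum_Ico_consecutive _ (Nat.zero_le (c':ℕ)) (le_of_lt c'.2)]
    have hlow : ∑ n ∈ Finset.Ico 0 (c':ℕ),
        gbinom (X i) (a + n + m) *
          (if (c':ℕ) ≤ n then ((k.choose (n - (c':ℕ))) : MvPolynomial (Fin t) ℚ) else 0)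
        = 0 := by
      apply Finset.sum_eq_zero
      intro n hn
      rw [Finset.mem_Ico] at hn
      rw [if_neg (by omega), mul_zero]
    rw [hlow, zero_add, Finset.sum_Ico_eq_sum_range]
    have hstep : ∀ m' ∈ Finset.range (b - (c':ℕ)),
        gbinom (X i) (a + ((c':ℕ) + m') + m) *
          (if (c':ℕ) ≤ (c':ℕ) + m'
           then ((k.choose (((c':ℕ) + m') - (c':ℕ))) : MvPolynomial (Fin t) ℚ) else 0)
        = (k.choose m' : MvPolynomial (Fin t) ℚ) * gbinom (X i) ((a + (c':ℕ) + m) + m') := by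
      intro m' _
      rw [if_pos (by omega),
        show (c':ℕ) + m' - (c':ℕ) = m' from by omega,
        show a + ((c':ℕ) + m') + m = (a + (c':ℕ) + m) + m' from by omega, mul_comm]
    rw [Finset.sum_congr rfl hstep]
    have hsplit : b - (c':ℕ) = (k+1) + ((b - (c':ℕ)) - (k+1)) := by omega
    rw [hsplit, Finset.sum_range_add]
    have hhigh : ∑ m' ∈ Finset.range ((b - (c':ℕ)) - (k+1)),
        (k.choose ((k+1) + m') : MvPolynomial (Fin t) ℚ) *
          gbinom (X i) ((a + (c':ℕ) + m) + ((k+1) + m')) = 0 := by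
      apply Finset.sum_eq_zero
      intro m' _
      rw [Nat.choose_eq_zero_of_lt (by omega), Nat.cast_zero, zero_mul]
    rw [hhigh, add_zero, gbinom_vandermonde]

open MvPolynomial in
theorem binom_det_divisibility_shift (a b t : ℕ) (ha : 1 ≤ a) (hb : 1 ≤ b) (ht : 1 ≤ t)
    (i : Fin t) (k : ℕ) (hk1 : 1 ≤ k) (hk2 : k ≤ b - 1) :
    (MvPolynomial.X i + (k : MvPolynomial (Fin t) ℚ)) ^ (b - k) ∣
      (binomMatrix a b t).det := by
  classical
  set R := MvPolynomial (Fin t) ℚ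
  set A := binomMatrix a b t
  set E := Emat b t i k
  have hdet : A.det = (A * E).det := by
    rw [Matrix.det_mul, Emat_det, mul_one]
  set g : Fin t × Fin b → R := fun q =>
    if q.1 = i ∧ (q.2:ℕ) + k ≤ b - 1 then (X i + (k:R)) else 1 with hg
  set B : Matrix (Fin t × Fin b) (Fin t × Fin b) R := fun p q =>
    if q.1 = i ∧ (q.2:ℕ) + k ≤ b - 1 then
      gbinomAux (X i + (k:R)) ((a + (q.2:ℕ) + (b * (p.1:ℕ) + (p.2:ℕ))) + k)
    else (A * E) p q with hB
  have hfact : A * E = Matrix.of (fun p q => g q * B p q) := by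
    apply Matrix.ext
    intro p q
    obtain ⟨q1, q2⟩ := q
    show (A * E) p (q1, q2) = g (q1, q2) * B p (q1, q2)
    by_cases h : q1 = i ∧ (q2:ℕ) + k ≤ b - 1
    · obtain ⟨h1, h2⟩ := h
      subst h1
      have hg1 : g (q1, q2) = X q1 + (k:R) := if_pos ⟨rfl, h2⟩
      have hB1 : B p (q1, q2)
          = gbinomAux (X q1 + (k:R)) ((a + (q2:ℕ) + (b*(p.1:ℕ)+(p.2:ℕ))) + k) :=
        if_pos ⟨rfl, h2⟩
      rw [hg1, hB1, mul_Emat_marked a b t q1 k ha hb p q2 h2]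
      exact gbinom_eq_mul_aux (R := MvPolynomial (Fin t) ℚ) _ _
        (le_trans hk1 (Nat.le_add_left k _))
    · have hg1 : g (q1, q2) = 1 := if_neg h
      have hB1 : B p (q1, q2) = (A * E) p (q1, q2) := if_neg h
      rw [hg1, hB1, one_mul]
  have hprod : (∏ q : Fin t × Fin b, g q) = (X i + (k:R)) ^ (b - k) := by
    rw [Fintype.prod_prod_type]
    rw [Finset.prod_eq_single_of_mem i (Finset.mem_univ i)]
    swap
    · intro s _ hs
      apply Finset.prod_eq_one
      intro c _
      simp only [hg]
      rw [if_neg (by simp [hs])]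
    · have h1 : ∀ c : Fin b, g (i, c)
          = (if (c:ℕ) + k ≤ b - 1 then (X i + (k:R)) else 1) := by
        intro c; simp only [hg]; by_cases h : (c:ℕ) + k ≤ b - 1 <;> simp [h]
      simp only [h1]
      rw [Fin.prod_univ_eq_prod_range
        (fun n => if n + k ≤ b - 1 then (X i + (k:R)) else 1) b]
      rw [Finset.range_eq_Ico,
        ← Finset.prod_Ico_consecutive _ (Nat.zero_le (b - k)) (Nat.sub_le b k)]
      have hlow : ∏ n ∈ Finset.Ico 0 (b - k),
          (if n + k ≤ b - 1 then (X i + (k:R)) else 1) = (X i + (k:R)) ^ (b - k) := by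
        rw [Finset.prod_congr rfl (g := fun _ => X i + (k:R)) (by
          intro n hn
          rw [Finset.mem_Ico] at hn
          rw [if_pos (by omega)]),
          Finset.prod_const, Nat.card_Ico, Nat.sub_zero]
      have hhigh : ∏ n ∈ Finset.Ico (b - k) b,
          (if n + k ≤ b - 1 then (X i + (k:R)) else 1) = 1 := by
        apply Finset.prod_eq_one
        intro n hn
        rw [Finset.mem_Ico] at hn
        rw [if_neg (by omega)]
      rw [hlow, hhigh, mul_one]
  refine ⟨B.det, ?_⟩
  rw [hdet, hfact, Matrix.det_mul_row, hprod]
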